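/- arXiv:2407.16635 — 2 statements merged into one kernel-verified Lean document; each statement's English description precedes it below -/
import Mathlib

section
/- The F₄ singularity f : (ℂ²,0) → (ℂ³,0), f(x,y) = (x, y², y⁵ + x³y), has ramification ideal equal to the ideal ⟨x³, y⟩ of ℂ{x,y}, and this ideal is not principal. Hence f is not a frontal map germ. -/
open MvPolynomial

/-- The 2×2 minor of the Jacobian of `f = (f₀,f₁,f₂) : (ℂ²,0) → (ℂ³,0)` obtained from the
columns of `f a` and `f b` (rows are ∂/∂x and ∂/∂y). -/
noncomputable def jacMinor (f : Fin 3 → MvPolynomial (Fin 2) ℂ) (a b : Fin 3) :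
    MvPolynomial (Fin 2) ℂ :=
  pderiv 0 (f a) * pderiv 1 (f b) - pderiv 0 (f b) * pderiv 1 (f a)

/-- The ramification ideal of `f`, as an ideal of the local ring of germs
(modelled by formal power series `ℂ⟦x,y⟧`): the ideal generated by the three
2×2 minors of the Jacobian of `f`. -/
noncomputable def ramIdeal (f : Fin 3 → MvPolynomial (Fin 2) ℂ) :
    Ideal (MvPowerSeries (Fin 2) ℂ) :=
  Ideal.span {(jacMinor f 0 1 : MvPowerSeries (Fin 2) ℂ),
    (jacMinor f 0 2 : MvPowerSeries (Fin 2) ℂ), (jacMinor f 1 2 : MvPowerSeries (Fin 2) ℂ)}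

namespace F4aux

theorem coe_num (n : ℕ) [n.AtLeastTwo] :
    ((OfNat.ofNat n : MvPolynomial (Fin 2) ℂ) : MvPowerSeries (Fin 2) ℂ) = OfNat.ofNat n := by
  rw [← coeToMvPowerSeries.ringHom_apply, map_ofNat]

theorem minor01 : ((jacMinor ![X 0, (X 1) ^ 2, (X 1) ^ 5 + (X 0) ^ 3 * X 1] 0 1 :
    MvPolynomial (Fin 2) ℂ) : MvPowerSeries (Fin 2) ℂ) = 2 * MvPowerSeries.X 1 := by
  have h : jacMinor ![X 0, (X 1) ^ 2, (X 1) ^ 5 + (X 0) ^ 3 * X 1] 0 1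
      = (2 * X 1 : MvPolynomial (Fin 2) ℂ) := by simp [jacMinor]
  rw [h]; push_cast; rw [coe_num]

theorem minor02 : ((jacMinor ![X 0, (X 1) ^ 2, (X 1) ^ 5 + (X 0) ^ 3 * X 1] 0 2 :
    MvPolynomial (Fin 2) ℂ) : MvPowerSeries (Fin 2) ℂ)
    = (MvPowerSeries.X 0) ^ 3 + 5 * (MvPowerSeries.X 1) ^ 4 := by
  have h : jacMinor ![X 0, (X 1) ^ 2, (X 1) ^ 5 + (X 0) ^ 3 * X 1] 0 2
      = ((X 0) ^ 3 + 5 * (X 1) ^ 4 : MvPolynomial (Fin 2) ℂ) := by simp [jacMinor]; ring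
  rw [h]; push_cast; rw [coe_num]

theorem minor12 : ((jacMinor ![X 0, (X 1) ^ 2, (X 1) ^ 5 + (X 0) ^ 3 * X 1] 1 2 :
    MvPolynomial (Fin 2) ℂ) : MvPowerSeries (Fin 2) ℂ)
    = -6 * (MvPowerSeries.X 0) ^ 2 * (MvPowerSeries.X 1) ^ 2 := by
  have h : jacMinor ![X 0, (X 1) ^ 2, (X 1) ^ 5 + (X 0) ^ 3 * X 1] 1 2
      = (-6 * (X 0) ^ 2 * (X 1) ^ 2 : MvPolynomial (Fin 2) ℂ) := by simp [jacMinor]; ring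
  rw [h]; push_cast
  rw [show ((-6 : MvPolynomial (Fin 2) ℂ) : MvPowerSeries (Fin 2) ℂ) = -6 by
    rw [← coeToMvPowerSeries.ringHom_apply, map_neg, map_ofNat]]

/-- The ideal equality. -/
theorem ideal_eq : ramIdeal ![X 0, (X 1) ^ 2, (X 1) ^ 5 + (X 0) ^ 3 * X 1]
    = Ideal.span {((MvPowerSeries.X 0) ^ 3 : MvPowerSeries (Fin 2) ℂ),
        (MvPowerSeries.X 1 : MvPowerSeries (Fin 2) ℂ)} := by
  rw [ramIdeal, minor01, minor02, minor12]
  apply le_antisymm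
  · rw [Ideal.span_le]
    rintro z hz
    simp only [Set.mem_insert_iff, Set.mem_singleton_iff] at hz
    rcases hz with rfl | rfl | rfl
    · exact Ideal.mem_span_pair.mpr ⟨0, 2, by ring⟩
    · exact Ideal.mem_span_pair.mpr ⟨1, 5 * (MvPowerSeries.X 1) ^ 3, by ring⟩
    · exact Ideal.mem_span_pair.mpr ⟨0, -6 * (MvPowerSeries.X 0) ^ 2 * MvPowerSeries.X 1, by ring⟩
  · rw [Ideal.span_le]
    rintro z hz
    simp only [Set.mem_insert_iff, Set.mem_singleton_iff] at hz
    rcases hz with rfl | rfl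
    · -- X 0 ^ 3 = (C (-(5/2)) * X1^3) * (2 X1) + 1 * (X0^3 + 5 X1^4)
      refine Ideal.mem_span_insert.mpr ⟨MvPowerSeries.C (σ := Fin 2) (R := ℂ) (-(5/2)) * (MvPowerSeries.X 1) ^ 3,
        (MvPowerSeries.X 0) ^ 3 + 5 * (MvPowerSeries.X 1) ^ 4, Ideal.subset_span (by simp), ?_⟩
      have h : (MvPowerSeries.C (σ := Fin 2) (R := ℂ) (-(5/2))) * 2 = -5 := by
        rw [show (2 : MvPowerSeries (Fin 2) ℂ) = MvPowerSeries.C (σ := Fin 2) (R := ℂ) 2 from (map_ofNat _ 2).symm,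
          ← map_mul, show (-5 : MvPowerSeries (Fin 2) ℂ) = MvPowerSeries.C (σ := Fin 2) (R := ℂ) (-5) by
            rw [map_neg, map_ofNat]]
        norm_num
      linear_combination (- (MvPowerSeries.X 1 : MvPowerSeries (Fin 2) ℂ) ^ 4) * h
    · refine Ideal.mem_span_insert.mpr ⟨MvPowerSeries.C (σ := Fin 2) (R := ℂ) (1/2), 0, Ideal.zero_mem _, ?_⟩
      have h : (MvPowerSeries.C (σ := Fin 2) (R := ℂ) (1/2)) * 2 = 1 := by
        rw [show (2 : MvPowerSeries (Fin 2) ℂ) = MvPowerSeries.C (σ := Fin 2) (R := ℂ) 2 from (map_ofNat _ 2).symm,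
          ← map_mul, show (1 : MvPowerSeries (Fin 2) ℂ) = MvPowerSeries.C (σ := Fin 2) (R := ℂ) 1 from (map_one _).symm]
        norm_num
      linear_combination (- (MvPowerSeries.X 1 : MvPowerSeries (Fin 2) ℂ)) * h

local notation "co" => MvPowerSeries.coeff (R := ℂ)

theorem coeff_single_mul (i : Fin 2) (n : ℕ) (a g : MvPowerSeries (Fin 2) ℂ) :
    co (Finsupp.single i n) (a * g)
      = ∑ p ∈ Finset.HasAntidiagonal.antidiagonal n, co (Finsupp.single i p.1) a * co (Finsupp.single i p.2) g := by
  classical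
  rw [MvPowerSeries.coeff_mul, Finsupp.antidiagonal_single, Finset.sum_map]
  rfl

-- coefficient of single 0 k in c * X0^3 is zero for k ≤ 2
theorem aux1 (c : MvPowerSeries (Fin 2) ℂ) (k : ℕ) (hk : k ≤ 2) :
    co (Finsupp.single 0 k) (c * (MvPowerSeries.X 0) ^ 3) = 0 := by
  classical
  rw [coeff_single_mul]
  refine Finset.sum_eq_zero fun p hp => ?_
  rw [MvPowerSeries.coeff_X_pow, if_neg, mul_zero]
  intro h
  have := Finsupp.single_injective (0 : Fin 2) h
  rw [Finset.HasAntidiagonal.mem_antidiagonal] at hp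
  omega

theorem aux2 (d : MvPowerSeries (Fin 2) ℂ) (k : ℕ) :
    co (Finsupp.single 0 k) (d * MvPowerSeries.X 1) = 0 := by
  classical
  rw [coeff_single_mul]
  refine Finset.sum_eq_zero fun p hp => ?_
  rw [MvPowerSeries.coeff_X, if_neg, mul_zero]
  simp [Finsupp.single_eq_single_iff]

-- main: span {X0^3, X1} is not principal
theorem not_principal :
    ¬ (Ideal.span {((MvPowerSeries.X 0) ^ 3 : MvPowerSeries (Fin 2) ℂ),
        (MvPowerSeries.X 1 : MvPowerSeries (Fin 2) ℂ)}).IsPrincipal := by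
  classical
  rintro ⟨g, hg⟩
  rw [Ideal.submodule_span_eq] at hg
  -- memberships
  have hx : ((MvPowerSeries.X 0) ^ 3 : MvPowerSeries (Fin 2) ℂ) ∈ Ideal.span {g} := by
    rw [← hg]; exact Ideal.subset_span (by simp)
  have hy : (MvPowerSeries.X 1 : MvPowerSeries (Fin 2) ℂ) ∈ Ideal.span {g} := by
    rw [← hg]; exact Ideal.subset_span (by simp)
  obtain ⟨a, ha⟩ := Ideal.mem_span_singleton'.mp hx
  obtain ⟨b, hb⟩ := Ideal.mem_span_singleton'.mp hy
  have hgmem : g ∈ Ideal.span {((MvPowerSeries.X 0) ^ 3 : MvPowerSeries (Fin 2) ℂ),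
      (MvPowerSeries.X 1 : MvPowerSeries (Fin 2) ℂ)} := by
    rw [hg]; exact Ideal.subset_span rfl
  obtain ⟨c, d, hcd⟩ := Ideal.mem_span_pair.mp hgmem
  -- low coefficients of g vanish
  have hgk : ∀ k ≤ 2, co (Finsupp.single 0 k) g = 0 := by
    intro k hk
    rw [← hcd, map_add, aux1 c k hk, aux2 d k, add_zero]
  have hg0 : co 0 g = 0 := by
    have := hgk 0 (by norm_num)
    rwa [Finsupp.single_zero] at this
  -- coeff of y in g is nonzero
  have key : co (Finsupp.single 1 0) b * co (Finsupp.single 1 1) g = 1 := by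
    have h1 : co (Finsupp.single 1 1) (b * g) = 1 := by
      rw [hb, MvPowerSeries.coeff_X, if_pos rfl]
    rw [coeff_single_mul, Finset.Nat.sum_antidiagonal_eq_sum_range_succ_mk] at h1
    rw [Finset.sum_range_succ, Finset.sum_range_succ, Finset.range_zero,
      Finset.sum_empty, zero_add] at h1
    rw [show Finsupp.single (1 : Fin 2) (1 - 1) = 0 from Finsupp.single_zero 1] at h1
    rw [hg0, mul_zero, add_zero] at h1
    simpa using h1
  have hgne : co (Finsupp.single 1 1) g ≠ 0 := by
    intro h
    rw [h, mul_zero] at key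
    exact zero_ne_one key
  -- constant coefficient of a vanishes
  have ha0 : co (0 : Fin 2 →₀ ℕ) a = 0 := by
    have h1 : co (Finsupp.single 1 1) (a * g) = 0 := by
      rw [ha, MvPowerSeries.coeff_X_pow, if_neg]
      intro h
      have := DFunLike.congr_fun h (1 : Fin 2)
      simp at this
    rw [coeff_single_mul, Finset.Nat.sum_antidiagonal_eq_sum_range_succ_mk] at h1
    rw [Finset.sum_range_succ, Finset.sum_range_succ, Finset.range_zero,
      Finset.sum_empty, zero_add] at h1
    rw [show Finsupp.single (1 : Fin 2) (1 - 1) = 0 from Finsupp.single_zero 1] at h1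
    rw [hg0, mul_zero, add_zero] at h1
    exact (mul_eq_zero.mp h1).resolve_right hgne
  -- coefficient of x^3 gives the contradiction
  have h3 : co (Finsupp.single 0 3) (a * g) = 1 := by
    rw [ha, MvPowerSeries.coeff_X_pow, if_pos rfl]
  rw [coeff_single_mul, Finset.Nat.sum_antidiagonal_eq_sum_range_succ_mk] at h3
  rw [Finset.sum_range_succ, Finset.sum_range_succ, Finset.sum_range_succ,
    Finset.sum_range_succ, Finset.range_zero, Finset.sum_empty, zero_add] at h3
  rw [show Finsupp.single (0 : Fin 2) 0 = 0 from Finsupp.single_zero 0] at h3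
  rw [ha0] at h3
  rw [hgk (3 - 1) (by norm_num), hgk (3 - 2) (by norm_num), hg0] at h3
  simp at h3

end F4aux

/-- The `F₄` singularity `f(x,y) = (x, y², y⁵ + x³y)` has ramification ideal
`⟨x³, y⟩`, which is not principal; hence `f` is not a frontal map germ. -/
theorem F4_not_frontal :
    ramIdeal ![X 0, (X 1) ^ 2, (X 1) ^ 5 + (X 0) ^ 3 * X 1]
        = Ideal.span {((MvPowerSeries.X 0) ^ 3 : MvPowerSeries (Fin 2) ℂ),
            (MvPowerSeries.X 1 : MvPowerSeries (Fin 2) ℂ)} ∧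
      ¬ (ramIdeal ![X 0, (X 1) ^ 2, (X 1) ^ 5 + (X 0) ^ 3 * X 1]).IsPrincipal := by
  refine ⟨F4aux.ideal_eq, ?_⟩
  rw [F4aux.ideal_eq]
  exact F4aux.not_principal
end

section
/- Let p = (p₁,…,p_k), q, μ = (μ₁,…,μ_k) be holomorphic functions of (x,y) ∈ ℂ^{n−k}×ℂ^k satisfying ∂q/∂y_ℓ = Σⱼ μⱼ ∂pⱼ/∂y_ℓ for all ℓ, and suppose the k×k matrix ∂μ/∂y is invertible at every point of an open set U. Define h(u,x,y) = (x, u, q(x,y) + Σᵢ μᵢ(x,y)(uᵢ − pᵢ(x,y))) for u ∈ ℂ^k. Then the critical set of h in ℂ^k × U is exactly the graph {(u,x,y) : uᵢ = pᵢ(x,y) for i=1,…,k}, which is a smooth submanifold, and on this set h(p(x,y),x,y) = (x, p(x,y), q(x,y)). -/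
theorem partial_fderiv' {m k : ℕ} (g : ((Fin m → ℂ) × (Fin k → ℂ)) → ℂ)
    (hg : ContDiff ℂ ⊤ g) (z : (Fin m → ℂ) × (Fin k → ℂ)) (v : Fin k → ℂ) :
    fderiv ℂ (fun y => g (z.1, y)) z.2 v = fderiv ℂ g z (0, v) := by
  have h1 : HasFDerivAt (fun y : Fin k → ℂ => (z.1, y))
      ((0 : (Fin k → ℂ) →L[ℂ] (Fin m → ℂ)).prod (ContinuousLinearMap.id ℂ _)) z.2 :=
    (hasFDerivAt_const z.1 _).prodMk (hasFDerivAt_id _)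
  have h2 : HasFDerivAt g (fderiv ℂ g z) (z.1, z.2) :=
    (hg.differentiable (by simp) _).hasFDerivAt
  have h3 := h2.comp z.2 h1
  rw [show (fun y => g (z.1, y)) = g ∘ Prod.mk z.1 from rfl, h3.fderiv]
  simp

noncomputable def Dmap' {m k : ℕ}
    (p mu : Fin k → ((Fin m → ℂ) × (Fin k → ℂ)) → ℂ)
    (q : ((Fin m → ℂ) × (Fin k → ℂ)) → ℂ)
    (w : (Fin k → ℂ) × ((Fin m → ℂ) × (Fin k → ℂ))) :
    ((Fin k → ℂ) × ((Fin m → ℂ) × (Fin k → ℂ))) →L[ℂ] ℂ :=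
  (fderiv ℂ q w.2).comp (ContinuousLinearMap.snd ℂ _ _) +
    ∑ i, (mu i w.2 • ((ContinuousLinearMap.proj i).comp
          (ContinuousLinearMap.fst ℂ (Fin k → ℂ) ((Fin m → ℂ) × (Fin k → ℂ))) -
        (fderiv ℂ (p i) w.2).comp (ContinuousLinearMap.snd ℂ _ _)) +
      (w.1 i - p i w.2) • ((fderiv ℂ (mu i) w.2).comp (ContinuousLinearMap.snd ℂ _ _)))

theorem Dmap'_apply {m k : ℕ}
    (p mu : Fin k → ((Fin m → ℂ) × (Fin k → ℂ)) → ℂ)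
    (q : ((Fin m → ℂ) × (Fin k → ℂ)) → ℂ)
    (w v : (Fin k → ℂ) × ((Fin m → ℂ) × (Fin k → ℂ))) :
    Dmap' p mu q w v = fderiv ℂ q w.2 v.2 +
      ∑ i, (mu i w.2 * (v.1 i - fderiv ℂ (p i) w.2 v.2) +
        (w.1 i - p i w.2) * fderiv ℂ (mu i) w.2 v.2) := by
  simp [Dmap', mul_sub, smul_eq_mul]

theorem hasFDerivF' {m k : ℕ}
    (p mu : Fin k → ((Fin m → ℂ) × (Fin k → ℂ)) → ℂ)
    (q : ((Fin m → ℂ) × (Fin k → ℂ)) → ℂ)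
    (hp : ∀ j, ContDiff ℂ ⊤ (p j)) (hq : ContDiff ℂ ⊤ q) (hmu : ∀ j, ContDiff ℂ ⊤ (mu j))
    (w : (Fin k → ℂ) × ((Fin m → ℂ) × (Fin k → ℂ))) :
    HasFDerivAt (fun w : (Fin k → ℂ) × ((Fin m → ℂ) × (Fin k → ℂ)) =>
      q w.2 + ∑ i, mu i w.2 * (w.1 i - p i w.2)) (Dmap' p mu q w) w := by
  have hsnd : HasFDerivAt (Prod.snd : (Fin k → ℂ) × ((Fin m → ℂ) × (Fin k → ℂ)) → _)
      (ContinuousLinearMap.snd ℂ _ _) w := hasFDerivAt_snd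
  have hqd : HasFDerivAt (fun w : (Fin k → ℂ) × ((Fin m → ℂ) × (Fin k → ℂ)) => q w.2)
      ((fderiv ℂ q w.2).comp (ContinuousLinearMap.snd ℂ _ _)) w :=
    ((hq.differentiable (by simp) _).hasFDerivAt).comp w hsnd
  have hmud : ∀ i, HasFDerivAt (fun w : (Fin k → ℂ) × ((Fin m → ℂ) × (Fin k → ℂ)) => mu i w.2)
      ((fderiv ℂ (mu i) w.2).comp (ContinuousLinearMap.snd ℂ _ _)) w := fun i =>
    (((hmu i).differentiable (by simp) _).hasFDerivAt).comp w hsnd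
  have hpd : ∀ i, HasFDerivAt (fun w : (Fin k → ℂ) × ((Fin m → ℂ) × (Fin k → ℂ)) => w.1 i - p i w.2)
      ((ContinuousLinearMap.proj i).comp
          (ContinuousLinearMap.fst ℂ (Fin k → ℂ) ((Fin m → ℂ) × (Fin k → ℂ))) -
        (fderiv ℂ (p i) w.2).comp (ContinuousLinearMap.snd ℂ _ _)) w := fun i =>
    (((ContinuousLinearMap.proj i).comp
        (ContinuousLinearMap.fst ℂ (Fin k → ℂ) ((Fin m → ℂ) × (Fin k → ℂ)))).hasFDerivAt).sub
      ((((hp i).differentiable (by simp) _).hasFDerivAt).comp w hsnd)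
  exact hqd.add (HasFDerivAt.fun_sum fun i _ => (hmud i).mul (hpd i))

-- decomposition of a CLM applied to (0, dz2)
theorem clm_zero_pair {m k : ℕ}
    (L : ((Fin m → ℂ) × (Fin k → ℂ)) →L[ℂ] ℂ) (dz : Fin k → ℂ) :
    L (0, dz) = ∑ l, dz l * L (0, Pi.single l 1) := by
  have h1 : ((0 : Fin m → ℂ), dz) = ∑ l, dz l • (((0 : Fin m → ℂ), Pi.single l 1) : (Fin m → ℂ) × (Fin k → ℂ)) := by
    rw [Prod.ext_iff]
    refine ⟨by simp [Prod.fst_sum], ?_⟩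
    rw [Prod.snd_sum]
    have : ∀ l : Fin k, (dz l • (((0 : Fin m → ℂ), Pi.single l 1) : (Fin m → ℂ) × (Fin k → ℂ))).2
        = Pi.single l (dz l) := by
      intro l; simp [← Pi.single_smul, smul_eq_mul]
    simp only [this, Finset.univ_sum_single]
  rw [h1, map_sum]
  refine Finset.sum_congr rfl fun l _ => ?_
  rw [map_smul]; rfl


/-- Construction of the generating family of a wave front: if
`∂q/∂y_ℓ = Σⱼ μⱼ ∂pⱼ/∂y_ℓ` and the matrix `∂μ/∂y` is invertible on an open set `U`,
then the critical set of `h(u,x,y) = (x, u, q + Σᵢ μᵢ(uᵢ − pᵢ))` in `ℂ^k × U` is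
exactly the graph `{u = p(x,y)}` (the image of the smooth map `z ↦ (p(z), z)`),
and on it `h(p(x,y),x,y) = (x, p(x,y), q(x,y))`. -/
theorem generating_family_critical_set (m k : ℕ)
    (p mu : Fin k → ((Fin m → ℂ) × (Fin k → ℂ)) → ℂ)
    (q : ((Fin m → ℂ) × (Fin k → ℂ)) → ℂ)
    (hp : ∀ j, ContDiff ℂ ⊤ (p j)) (hq : ContDiff ℂ ⊤ q) (hmu : ∀ j, ContDiff ℂ ⊤ (mu j))
    (hform : ∀ z (l : Fin k),
      fderiv ℂ q z (0, Pi.single l 1)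
        = ∑ j, mu j z * fderiv ℂ (p j) z (0, Pi.single l 1))
    (U : Set ((Fin m → ℂ) × (Fin k → ℂ))) (hUopen : IsOpen U)
    (hU : ∀ z ∈ U, IsUnit (Matrix.of fun j l : Fin k =>
      fderiv ℂ (fun y => mu j (z.1, y)) z.2 (Pi.single l 1)).det)
    (h : (Fin k → ℂ) × ((Fin m → ℂ) × (Fin k → ℂ)) →
      (Fin m → ℂ) × (Fin k → ℂ) × ℂ)
    (hh : ∀ u z, h (u, z) = (z.1, u, q z + ∑ i, mu i z * (u i - p i z))) :
    {w : (Fin k → ℂ) × ((Fin m → ℂ) × (Fin k → ℂ)) |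
        w.2 ∈ U ∧ ¬ Function.Surjective (fderiv ℂ h w)}
      = (fun z => ((fun i => p i z), z)) '' U ∧
    ∀ z, h ((fun i => p i z), z) = (z.1, (fun i => p i z), q z) := by
  have hhe : h = fun w : (Fin k → ℂ) × ((Fin m → ℂ) × (Fin k → ℂ)) =>
      (w.2.1, w.1, q w.2 + ∑ i, mu i w.2 * (w.1 i - p i w.2)) := by
    funext w
    rw [show w = (w.1, w.2) from rfl, hh w.1 w.2]
  have hDh : ∀ w, HasFDerivAt h
      (((ContinuousLinearMap.fst ℂ (Fin m → ℂ) (Fin k → ℂ)).comp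
          (ContinuousLinearMap.snd ℂ (Fin k → ℂ) ((Fin m → ℂ) × (Fin k → ℂ)))).prod
        ((ContinuousLinearMap.fst ℂ (Fin k → ℂ) ((Fin m → ℂ) × (Fin k → ℂ))).prod
          (Dmap' p mu q w))) w := by
    intro w
    rw [hhe]
    exact (((ContinuousLinearMap.fst ℂ (Fin m → ℂ) (Fin k → ℂ)).comp
        (ContinuousLinearMap.snd ℂ (Fin k → ℂ) ((Fin m → ℂ) × (Fin k → ℂ)))).hasFDerivAt).prodMk
      (((ContinuousLinearMap.fst ℂ (Fin k → ℂ)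
          ((Fin m → ℂ) × (Fin k → ℂ))).hasFDerivAt).prodMk (hasFDerivF' p mu q hp hq hmu w))
  have happ : ∀ w v, fderiv ℂ h w v = (v.2.1, v.1, Dmap' p mu q w v) := by
    intro w v
    rw [(hDh w).fderiv]
    rfl
  refine ⟨?_, fun z => by rw [hh]; simp⟩
  ext w
  simp only [Set.mem_setOf_eq, Set.mem_image]
  constructor
  · rintro ⟨hwU, hns⟩
    refine ⟨w.2, hwU, ?_⟩
    have hvan : ∀ l : Fin k, Dmap' p mu q w
        ((0 : Fin k → ℂ), ((0 : Fin m → ℂ), (Pi.single l 1 : Fin k → ℂ))) = 0 := by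
      intro l
      by_contra hd
      apply hns
      intro c
      set d : ℂ := Dmap' p mu q w
        ((0 : Fin k → ℂ), ((0 : Fin m → ℂ), (Pi.single l 1 : Fin k → ℂ))) with hdd
      set t : ℂ := (c.2.2 - Dmap' p mu q w (c.2.1, (c.1, (0 : Fin k → ℂ)))) / d with ht
      set v₀ : (Fin k → ℂ) × ((Fin m → ℂ) × (Fin k → ℂ)) :=
        (c.2.1, (c.1, t • (Pi.single l 1 : Fin k → ℂ))) with hv₀
      have hsplit : v₀ = (c.2.1, (c.1, (0 : Fin k → ℂ))) +
          t • ((0 : Fin k → ℂ), ((0 : Fin m → ℂ), (Pi.single l 1 : Fin k → ℂ))) := by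
        rw [hv₀]
        simp [Prod.ext_iff]
      have hthird : Dmap' p mu q w v₀ = c.2.2 := by
        rw [hsplit, map_add, map_smul, smul_eq_mul, ← hdd, ht]
        field_simp
        ring
      refine ⟨v₀, ?_⟩
      rw [happ]
      exact Prod.ext_iff.mpr ⟨rfl, Prod.ext_iff.mpr ⟨rfl, hthird⟩⟩
    set M : Matrix (Fin k) (Fin k) ℂ := Matrix.of (fun j l : Fin k =>
      fderiv ℂ (fun y => mu j (w.2.1, y)) w.2.2 (Pi.single l 1)) with hM
    have hMent : ∀ j l, M j l = fderiv ℂ (mu j) w.2 (0, Pi.single l 1) := by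
      intro j l
      rw [hM, Matrix.of_apply]
      exact partial_fderiv' (mu j) (hmu j) w.2 _
    have hvm : Matrix.vecMul (fun i => w.1 i - p i w.2) M = 0 := by
      funext l
      have h1 := hvan l
      rw [Dmap'_apply] at h1
      simp only [Pi.zero_apply, zero_sub, mul_neg] at h1
      rw [Finset.sum_add_distrib, Finset.sum_neg_distrib, hform w.2 l] at h1
      simp only [Matrix.vecMul, dotProduct, hMent, Pi.zero_apply]
      linear_combination h1
    have hc0 : (fun i => w.1 i - p i w.2) = (0 : Fin k → ℂ) := by
      have hinv := Matrix.mul_nonsing_inv M (hU _ hwU)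
      calc (fun i => w.1 i - p i w.2)
          = Matrix.vecMul (fun i => w.1 i - p i w.2) (1 : Matrix (Fin k) (Fin k) ℂ) :=
            (Matrix.vecMul_one _).symm
        _ = Matrix.vecMul (fun i => w.1 i - p i w.2) (M * M⁻¹) := by rw [hinv]
        _ = Matrix.vecMul (Matrix.vecMul (fun i => w.1 i - p i w.2) M) M⁻¹ :=
            (Matrix.vecMul_vecMul _ M M⁻¹).symm
        _ = 0 := by rw [hvm]; exact Matrix.zero_vecMul _
    have hw1 : (fun i => p i w.2) = w.1 := by
      funext i
      have := congrFun hc0 i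
      simp only [Pi.zero_apply, sub_eq_zero] at this
      exact this.symm
    exact Prod.ext_iff.mpr ⟨hw1, rfl⟩
  · rintro ⟨z, hz, rfl⟩
    refine ⟨hz, ?_⟩
    have hzero : ∀ dz : Fin k → ℂ,
        Dmap' p mu q ((fun i => p i z), z) ((0 : Fin k → ℂ), ((0 : Fin m → ℂ), dz)) = 0 := by
      intro dz
      rw [Dmap'_apply]
      simp only [Pi.zero_apply, zero_sub, sub_self, zero_mul, add_zero, mul_neg, mul_zero]
      have e1 : fderiv ℂ q z ((0 : Fin m → ℂ), dz)
          = ∑ l, ∑ i, dz l * (mu i z * fderiv ℂ (p i) z (0, Pi.single l 1)) := by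
        rw [clm_zero_pair]
        exact Finset.sum_congr rfl fun l _ => by rw [hform z l, Finset.mul_sum]
      have e2 : ∀ i, mu i z * fderiv ℂ (p i) z ((0 : Fin m → ℂ), dz)
          = ∑ l, dz l * (mu i z * fderiv ℂ (p i) z (0, Pi.single l 1)) := by
        intro i
        rw [clm_zero_pair (fderiv ℂ (p i) z) dz, Finset.mul_sum]
        exact Finset.sum_congr rfl fun l _ => by ring
      rw [e1]
      simp only [e2, Finset.sum_neg_distrib]
      rw [Finset.sum_comm]
      ring
    intro hs
    obtain ⟨v, hv⟩ := hs ((0 : Fin m → ℂ), ((0 : Fin k → ℂ), (1 : ℂ)))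
    rw [happ] at hv
    simp only [Prod.mk.injEq] at hv
    obtain ⟨hv1, hv2, hv3⟩ := hv
    have h0 := hzero v.2.2
    rw [show ((0 : Fin k → ℂ), ((0 : Fin m → ℂ), v.2.2)) = v from
      Prod.ext_iff.mpr ⟨hv2.symm, Prod.ext_iff.mpr ⟨hv1.symm, rfl⟩⟩] at h0
    rw [hv3] at h0
    exact one_ne_zero h0
end
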